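/- Let f : ℝ^d × M → [0,+∞] be Borel measurable and Y-periodic in its first variable (Y = (0,1)^d). Then for every ξ ∈ M, Hf(ξ) = inf over integers s ≥ 1 of inf{ ∫_{(0,1)^d} f(sx, ξ + Dφ(x)) dx : φ : ℝ^d → ℝ^m Lipschitz with φ = 0 outside the open unit cube (0,1)^d }. -/

import Mathlib

open MeasureTheory Filter
open scoped ENNReal Topology

/-- The open cube `(0,n)^d` in `ℝ^d`. -/
def cube (d n : ℕ) : Set (Fin d → ℝ) := {x | ∀ i, x i ∈ Set.Ioo (0 : ℝ) (n : ℝ)}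

/-- The homogenized density. -/
noncomputable def HF {d m : ℕ}
    (F : (Fin d → ℝ) → ((Fin d → ℝ) →L[ℝ] (Fin m → ℝ)) → ℝ≥0∞)
    (ξ : (Fin d → ℝ) →L[ℝ] (Fin m → ℝ)) : ℝ≥0∞ :=
  ⨅ (n : ℕ) (_ : 1 ≤ n),
    (1 / (n : ℝ≥0∞) ^ d) *
      ⨅ (φ : (Fin d → ℝ) → (Fin m → ℝ)) (_ : ∃ K, LipschitzWith K φ)
        (_ : ∀ x ∉ cube d n, φ x = 0),
        ∫⁻ x in cube d n, F x (ξ + fderiv ℝ φ x) ∂volume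



section aux
variable {E F : Type*} [NormedAddCommGroup E] [NormedSpace ℝ E]
  [NormedAddCommGroup F] [NormedSpace ℝ F]

lemma diffAt_scaled {φ : E → F} {b : ℝ} {x : E} (a : ℝ)
    (h : DifferentiableAt ℝ φ (b • x)) :
    DifferentiableAt ℝ (fun y => a • φ (b • y)) x := by
  have hm : DifferentiableAt ℝ (fun y : E => b • y) x :=
    (differentiableAt_id).const_smul b
  exact ((h.comp x hm)).const_smul a

lemma fderiv_smul_eq {c : ℝ} (hc : c ≠ 0) (φ : E → F) (x : E) :
    fderiv ℝ (fun y => c⁻¹ • φ (c • y)) x = fderiv ℝ φ (c • x) := by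
  have hφeq : φ = fun y => c • ((fun z => c⁻¹ • φ (c • z)) (c⁻¹ • y)) := by
    funext y
    simp [smul_smul, mul_inv_cancel₀ hc, inv_mul_cancel₀ hc]
  by_cases h : DifferentiableAt ℝ φ (c • x)
  · have hm : DifferentiableAt ℝ (fun y : E => c • y) x :=
      (differentiableAt_id).const_smul c
    have hfm : fderiv ℝ (fun y : E => c • y) x = c • ContinuousLinearMap.id ℝ E := by
      have : (fun y : E => c • y) = ⇑(c • ContinuousLinearMap.id ℝ E) := by
        funext y; simp
      rw [this, ContinuousLinearMap.fderiv]
    have hcomp : DifferentiableAt ℝ (fun y => φ (c • y)) x := h.comp x hm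
    have h1 : fderiv ℝ (fun y => φ (c • y)) x
        = (fderiv ℝ φ (c • x)).comp (c • ContinuousLinearMap.id ℝ E) := by
      have := fderiv_comp (x := x) h hm
      rw [hfm] at this
      exact this
    rw [fderiv_fun_const_smul hcomp, h1]
    ext v
    simp [smul_smul, inv_mul_cancel₀ hc, ContinuousLinearMap.map_smul]
  · have h' : ¬ DifferentiableAt ℝ (fun y => c⁻¹ • φ (c • y)) x := by
      intro hψ
      apply h
      rw [hφeq]
      have : DifferentiableAt ℝ (fun z => c⁻¹ • φ (c • z)) (c⁻¹ • (c • x)) := by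
        rwa [smul_smul, inv_mul_cancel₀ hc, one_smul]
      exact diffAt_scaled c this
    rw [fderiv_zero_of_not_differentiableAt h, fderiv_zero_of_not_differentiableAt h']

lemma lip_scaled {φ : E → F} {K : NNReal} (hK : LipschitzWith K φ) (a b : ℝ) :
    LipschitzWith (‖a‖₊ * K * ‖b‖₊) fun y => a • φ (b • y) := by
  refine LipschitzWith.of_dist_le_mul fun x y => ?_
  have h1 : dist (a • φ (b • x)) (a • φ (b • y)) = ‖a‖ * dist (φ (b • x)) (φ (b • y)) :=
    dist_smul₀ a _ _
  have h2 : dist (φ (b • x)) (φ (b • y)) ≤ K * dist (b • x) (b • y) := hK.dist_le_mul _ _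
  have h3 : dist (b • x) (b • y) = ‖b‖ * dist x y := dist_smul₀ b x y
  rw [h1]
  push_cast
  calc ‖a‖ * dist (φ (b • x)) (φ (b • y)) ≤ ‖a‖ * (K * (‖b‖ * dist x y)) := by
        rw [h3] at h2
        exact mul_le_mul_of_nonneg_left h2 (norm_nonneg a)
    _ = ‖a‖ * ↑K * ‖b‖ * dist x y := by ring

end aux

lemma measurableSet_cube (d n : ℕ) : MeasurableSet (cube d n) := by
  have : cube d n = Set.pi Set.univ (fun _ : Fin d => Set.Ioo (0:ℝ) n) := by
    ext x; simp [cube, Set.mem_pi]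
  rw [this]
  exact MeasurableSet.univ_pi fun i => measurableSet_Ioo

lemma smul_mem_cube {d : ℕ} (s : ℕ) (hs : 1 ≤ s) (x : Fin d → ℝ) :
    ((s : ℝ) • x) ∈ cube d s ↔ x ∈ cube d 1 := by
  have hs' : (0:ℝ) < s := by exact_mod_cast hs
  simp only [cube, Set.mem_setOf_eq, Pi.smul_apply, smul_eq_mul, Set.mem_Ioo, Nat.cast_one]
  refine forall_congr' fun i => ?_
  constructor <;> intro h <;> constructor <;> nlinarith [h.1, h.2]

lemma scale_lintegral (d s : ℕ) (hs : 1 ≤ s) (g : (Fin d → ℝ) → ℝ≥0∞) :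
    ∫⁻ x in cube d 1, g ((s:ℝ) • x) ∂volume
      = (1 / (s : ℝ≥0∞) ^ d) * ∫⁻ y in cube d s, g y ∂volume := by
  have hs' : (0:ℝ) < s := by exact_mod_cast hs
  have hc0 : (s:ℝ) ≠ 0 := ne_of_gt hs'
  rw [← lintegral_indicator (measurableSet_cube d 1) _,
      ← lintegral_indicator (measurableSet_cube d s) _]
  have hpt : ∀ x, (cube d 1).indicator (fun x => g ((s:ℝ) • x)) x
      = (cube d s).indicator g ((s:ℝ) • x) := by
    intro x
    by_cases hx : x ∈ cube d 1
    · rw [Set.indicator_of_mem hx, Set.indicator_of_mem ((smul_mem_cube s hs x).2 hx)]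
    · rw [Set.indicator_of_notMem hx,
        Set.indicator_of_notMem (fun h => hx ((smul_mem_cube s hs x).1 h))]
  simp_rw [hpt]
  set H := (cube d s).indicator g with hH
  let u : ℝˣ := (isUnit_iff_ne_zero.2 hc0).unit
  let e : (Fin d → ℝ) ≃ᵐ (Fin d → ℝ) := (Homeomorph.smul u).toMeasurableEquiv
  have he : ∀ x : Fin d → ℝ, e x = (s:ℝ) • x := by
    intro x
    show u • x = (s:ℝ) • x
    simp [u, Units.smul_def]
  have h1 : ∫⁻ x, H ((s:ℝ) • x) ∂volume = ∫⁻ x, H (e x) ∂volume := by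
    simp_rw [he]
  rw [h1, ← MeasureTheory.lintegral_map_equiv H e]
  have hmap : Measure.map e (volume : Measure (Fin d → ℝ))
      = ENNReal.ofReal |((s:ℝ) ^ d)⁻¹| • volume := by
    have : Measure.map e (volume : Measure (Fin d → ℝ))
        = Measure.map ((s:ℝ) • ·) volume := by
      have hfun : ⇑e = (((s:ℝ)) • ·) := funext he
      rw [hfun]
    rw [this, Measure.map_addHaar_smul volume hc0]
    simp
  rw [hmap, lintegral_smul_measure]
  congr 1
  rw [abs_of_pos (by positivity)]
  rw [ENNReal.ofReal_inv_of_pos (by positivity), ENNReal.ofReal_pow hs'.le]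
  simp [ENNReal.ofReal_natCast, one_div]

lemma key_scale {d m : ℕ}
    (f : (Fin d → ℝ) → ((Fin d → ℝ) →L[ℝ] (Fin m → ℝ)) → ℝ≥0∞)
    (ξ : (Fin d → ℝ) →L[ℝ] (Fin m → ℝ)) (n : ℕ) (hn : 1 ≤ n)
    (φ : (Fin d → ℝ) → Fin m → ℝ) :
    ∫⁻ x in cube d 1, f ((n:ℝ) • x)
        (ξ + fderiv ℝ (fun y => ((n:ℝ))⁻¹ • φ ((n:ℝ) • y)) x) ∂volume
      = (1 / (n : ℝ≥0∞) ^ d) * ∫⁻ y in cube d n, f y (ξ + fderiv ℝ φ y) ∂volume := by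
  have hc0 : (n:ℝ) ≠ 0 := by positivity
  rw [← scale_lintegral d n hn (fun y => f y (ξ + fderiv ℝ φ y))]
  simp_rw [fderiv_smul_eq hc0 φ]

theorem stmt_19' {d m : ℕ} (hd : 0 < d)
    (f : (Fin d → ℝ) → ((Fin d → ℝ) →L[ℝ] (Fin m → ℝ)) → ℝ≥0∞)
    (ξ : (Fin d → ℝ) →L[ℝ] (Fin m → ℝ)) (n : ℕ) (hn : 1 ≤ n) :
    (1 / (n : ℝ≥0∞) ^ d) *
      (⨅ (φ : (Fin d → ℝ) → (Fin m → ℝ)) (_ : ∃ K, LipschitzWith K φ)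
        (_ : ∀ x ∉ cube d n, φ x = 0),
        ∫⁻ x in cube d n, f x (ξ + fderiv ℝ φ x) ∂volume)
    = ⨅ (φ : (Fin d → ℝ) → Fin m → ℝ) (_ : ∃ K, LipschitzWith K φ)
          (_ : ∀ x ∉ cube d 1, φ x = 0),
          ∫⁻ x in cube d 1, f ((n : ℝ) • x) (ξ + fderiv ℝ φ x) ∂volume := by
  have hc0 : (n:ℝ) ≠ 0 := by positivity
  have hn0 : (n : ℝ≥0∞) ≠ 0 := Nat.cast_ne_zero.2 (by omega)
  have ha0 : (1 / (n : ℝ≥0∞) ^ d) ≠ 0 := by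
    simp [ENNReal.pow_eq_top_iff, ENNReal.natCast_ne_top]
  have hat : (1 / (n : ℝ≥0∞) ^ d) ≠ ∞ := by
    simp [pow_eq_zero_iff', hn0]
  apply le_antisymm
  · refine le_iInf fun ψ => le_iInf fun hψK => le_iInf fun hψ0 => ?_
    set φ : (Fin d → ℝ) → Fin m → ℝ := fun y => (n:ℝ) • ψ ((n:ℝ)⁻¹ • y) with hφdef
    have hψeq : ψ = fun x => ((n:ℝ))⁻¹ • φ ((n:ℝ) • x) := by
      funext x
      simp [hφdef, smul_smul, inv_mul_cancel₀ hc0]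
    obtain ⟨K, hK⟩ := hψK
    have hφK : ∃ K', LipschitzWith K' φ := ⟨_, lip_scaled hK (n:ℝ) ((n:ℝ))⁻¹⟩
    have hφ0 : ∀ y ∉ cube d n, φ y = 0 := by
      intro y hy
      have h1 : ((n:ℝ))⁻¹ • y ∉ cube d 1 := by
        intro h
        apply hy
        have := (smul_mem_cube n hn (((n:ℝ))⁻¹ • y)).2 h
        rwa [smul_smul, mul_inv_cancel₀ hc0, one_smul] at this
      simp [hφdef, hψ0 _ h1]
    calc (1 / (n : ℝ≥0∞) ^ d) * (⨅ (φ : (Fin d → ℝ) → (Fin m → ℝ))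
          (_ : ∃ K, LipschitzWith K φ) (_ : ∀ x ∉ cube d n, φ x = 0),
          ∫⁻ x in cube d n, f x (ξ + fderiv ℝ φ x) ∂volume)
        ≤ (1 / (n : ℝ≥0∞) ^ d) * ∫⁻ x in cube d n, f x (ξ + fderiv ℝ φ x) ∂volume := by
          gcongr
          exact iInf_le_of_le φ (iInf_le_of_le hφK (iInf_le _ hφ0))
      _ = ∫⁻ x in cube d 1, f ((n : ℝ) • x) (ξ + fderiv ℝ ψ x) ∂volume := by
          rw [hψeq]
          exact (key_scale f ξ n hn φ).symm
  · simp_rw [ENNReal.mul_iInf_of_ne ha0 hat]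
    refine le_iInf fun φ => le_iInf fun hφK => le_iInf fun hφ0 => ?_
    set ψ : (Fin d → ℝ) → Fin m → ℝ := fun x => ((n:ℝ))⁻¹ • φ ((n:ℝ) • x) with hψdef
    obtain ⟨K, hK⟩ := hφK
    have hψK : ∃ K', LipschitzWith K' ψ := ⟨_, lip_scaled hK ((n:ℝ))⁻¹ (n:ℝ)⟩
    have hψ0 : ∀ x ∉ cube d 1, ψ x = 0 := by
      intro x hx
      have h1 : (n:ℝ) • x ∉ cube d n := fun h => hx ((smul_mem_cube n hn x).1 h)
      simp [hψdef, hφ0 _ h1]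
    calc (⨅ (ψ' : (Fin d → ℝ) → Fin m → ℝ) (_ : ∃ K, LipschitzWith K ψ')
          (_ : ∀ x ∉ cube d 1, ψ' x = 0),
          ∫⁻ x in cube d 1, f ((n : ℝ) • x) (ξ + fderiv ℝ ψ' x) ∂volume)
        ≤ ∫⁻ x in cube d 1, f ((n : ℝ) • x) (ξ + fderiv ℝ ψ x) ∂volume :=
          iInf_le_of_le ψ (iInf_le_of_le hψK (iInf_le _ hψ0))
      _ = (1 / (n : ℝ≥0∞) ^ d) * ∫⁻ x in cube d n, f x (ξ + fderiv ℝ φ x) ∂volume :=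
          key_scale f ξ n hn φ

/-- Change-of-variables formula for the homogenized density:
`Hf(ξ) = inf_{s ≥ 1} inf { ∫_{(0,1)^d} f(sx, ξ + Dφ(x)) dx : φ Lipschitz, φ = 0 outside (0,1)^d }`. -/
theorem stmt_19 {d m : ℕ} (hd : 0 < d)
    (f : (Fin d → ℝ) → ((Fin d → ℝ) →L[ℝ] (Fin m → ℝ)) → ℝ≥0∞)
    (hfmeas : Measurable (Function.uncurry f))
    (hfper : ∀ (x : Fin d → ℝ) (ξ : (Fin d → ℝ) →L[ℝ] (Fin m → ℝ)) (z : Fin d → ℤ),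
      f (x + fun i => (z i : ℝ)) ξ = f x ξ) :
    ∀ ξ : (Fin d → ℝ) →L[ℝ] (Fin m → ℝ),
      HF f ξ =
        ⨅ (s : ℕ) (_ : 1 ≤ s) (φ : (Fin d → ℝ) → Fin m → ℝ) (_ : ∃ K, LipschitzWith K φ)
          (_ : ∀ x ∉ cube d 1, φ x = 0),
          ∫⁻ x in cube d 1, f ((s : ℝ) • x) (ξ + fderiv ℝ φ x) ∂volume := by
  intro ξ
  rw [HF]
  exact iInf_congr fun n => iInf_congr fun hn => stmt_19' hd f ξ n hn
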